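/- Let W_k ≥ 0, V_* ≥ 0 and k ∈ {1,…,d}. Suppose the compactly supported Borel probability measure μ on ℝ^d × ℝ^d satisfies supp(μ) ⊆ ℝ^d × ([0,V_*]^{k−1} × [0,W_k] × [0,V_*]^{d−k}), i.e. every (y,w) ∈ supp(μ) has 0 ≤ w_k ≤ W_k and 0 ≤ w_j ≤ V_* for j ≠ k. Then for every (x,v) ∈ ℝ^d × ℝ^d with v_k ≥ W_k one has ⟨ξ[μ](x,v), e_k⟩ ≤ 0, and for every (x,v) with v_k ≤ 0 one has ⟨ξ[μ](x,v), e_k⟩ ≥ 0, where e_k is the k-th standard basis vector of ℝ^d. -/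

import Mathlib

open MeasureTheory Metric Set

/-- The (topological) support of a measure: points all of whose open
neighborhoods have positive measure. -/
def msupp {α : Type*} [TopologicalSpace α] [MeasurableSpace α]
    (μ : Measure α) : Set α :=
  {x | ∀ U : Set α, IsOpen U → x ∈ U → 0 < μ U}

/-- The Cucker–Smale interaction kernel
`ξ[μ](x,v) = ∫ φ(‖x - y‖) (w - v) dμ(y,w)`. -/
noncomputable def xi {d : ℕ} (φ : ℝ → ℝ)
    (μ : Measure (EuclideanSpace ℝ (Fin d) × EuclideanSpace ℝ (Fin d)))
    (x v : EuclideanSpace ℝ (Fin d)) : EuclideanSpace ℝ (Fin d) :=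
  ∫ p, φ (‖x - p.1‖) • (p.2 - v) ∂μ

lemma msupp_compl_null {α : Type*} [TopologicalSpace α]
    [SecondCountableTopology α] [MeasurableSpace α]
    (μ : Measure α) : μ (msupp μ)ᶜ = 0 := by
  have h : ∀ x : ((msupp μ)ᶜ : Set α), ∃ U : Set α, IsOpen U ∧ (x : α) ∈ U ∧ μ U = 0 := by
    rintro ⟨x, hx⟩
    simp only [msupp, mem_compl_iff, mem_setOf_eq, not_forall] at hx
    obtain ⟨U, hU, hxU, hμ⟩ := hx
    exact ⟨U, hU, hxU, by simpa using hμ⟩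
  choose U hUo hxU hU0 using h
  obtain ⟨T, hTc, hT⟩ := TopologicalSpace.isOpen_iUnion_countable U hUo
  have hsub : (msupp μ)ᶜ ⊆ ⋃ i, U i := fun x hx => mem_iUnion.2 ⟨⟨x, hx⟩, hxU _⟩
  refine measure_mono_null hsub ?_
  rw [← hT]
  exact (measure_biUnion_null_iff hTc).2 fun i _ => hU0 i

theorem stmt0 {d : ℕ} (hd : 0 < d) (φ : ℝ → ℝ) (hφc : Continuous φ)
    (hφa : Antitone φ) (hφp : ∀ r : ℝ, 0 < φ r)
    (μ : Measure (EuclideanSpace ℝ (Fin d) × EuclideanSpace ℝ (Fin d)))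
    [IsProbabilityMeasure μ] (hcs : IsCompact (msupp μ))
    (k : Fin d) (Wk Vs : ℝ) (hWk : 0 ≤ Wk) (hVs : 0 ≤ Vs)
    (hsupp : ∀ p ∈ msupp μ,
      (0 ≤ p.2 k ∧ p.2 k ≤ Wk) ∧ ∀ j : Fin d, j ≠ k → 0 ≤ p.2 j ∧ p.2 j ≤ Vs)
    (x v : EuclideanSpace ℝ (Fin d)) :
    (Wk ≤ v k → xi φ μ x v k ≤ 0) ∧ (v k ≤ 0 → 0 ≤ xi φ μ x v k) := by
  have hae : ∀ᵐ p ∂μ, p ∈ msupp μ := by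
    rw [ae_iff]
    exact msupp_compl_null μ
  set f : EuclideanSpace ℝ (Fin d) × EuclideanSpace ℝ (Fin d) → EuclideanSpace ℝ (Fin d) :=
    fun p => φ (‖x - p.1‖) • (p.2 - v) with hf
  have hfc : Continuous f := by
    exact ((hφc.comp ((continuous_const.sub continuous_fst).norm)).smul
      (continuous_snd.sub continuous_const))
  have hint : Integrable f μ := by
    obtain ⟨C, hC⟩ := (hcs.image_of_continuousOn hfc.continuousOn).isBounded.exists_norm_le
    refine (integrable_const C).mono' hfc.aestronglyMeasurable ?_
    filter_upwards [hae] with p hp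
    exact hC _ (mem_image_of_mem _ hp)
  have hcoord : xi φ μ x v k = ∫ p, φ (‖x - p.1‖) * (p.2 k - v k) ∂μ := by
    have := (EuclideanSpace.proj (𝕜 := ℝ) k).integral_comp_comm hint
    rw [xi, show (∫ p, f p ∂μ) k = EuclideanSpace.proj (𝕜 := ℝ) k (∫ p, f p ∂μ) from rfl,
      ← this]
    rfl
  constructor
  · intro hv
    rw [hcoord]
    refine integral_nonpos_of_ae ?_
    filter_upwards [hae] with p hp
    have h1 := (hsupp p hp).1.2
    exact mul_nonpos_of_nonneg_of_nonpos (hφp _).le (by linarith)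
  · intro hv
    rw [hcoord]
    refine integral_nonneg_of_ae ?_
    filter_upwards [hae] with p hp
    have h1 := (hsupp p hp).1.1
    exact mul_nonneg (hφp _).le (by linarith)
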